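/- With the same setup as the second-order consensus recursion (Π = I − (1/n)𝟙𝟙ᵀ, W symmetric doubly stochastic with ‖UᵀWU‖₂ ≤ 1−ρ, P⁺ = WP − γG), the fourth-power bound holds: ‖ΠP⁺‖_F⁴ ≤ (1 − ρ)‖ΠP‖_F⁴ + (γ⁴/ρ³)‖ΠG‖_F⁴. -/

import Mathlib

open Finset Matrix

/-- Euclidean norm of a finite real vector. -/
noncomputable def euclNorm {m : Type*} [Fintype m] (v : m → ℝ) : ℝ :=
  Real.sqrt (∑ i, v i ^ 2)

/-- Frobenius norm of a real matrix. -/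
noncomputable def frobNorm {m k : Type*} [Fintype m] [Fintype k]
    (M : Matrix m k ℝ) : ℝ :=
  Real.sqrt (∑ i, ∑ j, M i j ^ 2)

lemma young_step {ρ x y : ℝ} (hρ1 : ρ ≤ 1) :
    ρ * ((1 - ρ) * x + y) ^ 2 ≤ ρ * (1 - ρ) * x ^ 2 + y ^ 2 := by
  nlinarith [mul_nonneg (sub_nonneg.2 hρ1) (sq_nonneg (ρ * x - y))]

lemma pow4_bound {ρ b c γ : ℝ} (hρ : 0 < ρ) (hρ1 : ρ ≤ 1) :
    ((1 - ρ) * b + γ * c) ^ 4 ≤ (1 - ρ) * b ^ 4 + (γ ^ 4 / ρ ^ 3) * c ^ 4 := by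
  have h1 : ρ * ((1 - ρ) * b + γ * c) ^ 2 ≤ (1 - ρ) * (ρ * b ^ 2) + γ ^ 2 * c ^ 2 := by
    have := young_step (x := b) (y := γ * c) hρ1
    nlinarith [this]
  have h2 := young_step (x := ρ * b ^ 2) (y := γ ^ 2 * c ^ 2) hρ1
  have h0 : 0 ≤ ρ * ((1 - ρ) * b + γ * c) ^ 2 := by positivity
  have h1sq : (ρ * ((1 - ρ) * b + γ * c) ^ 2) ^ 2
      ≤ ((1 - ρ) * (ρ * b ^ 2) + γ ^ 2 * c ^ 2) ^ 2 := pow_le_pow_left₀ h0 h1 2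
  have hρ3 : (0 : ℝ) < ρ ^ 3 := pow_pos hρ 3
  have key : ρ ^ 3 * ((1 - ρ) * b + γ * c) ^ 4
      ≤ ρ ^ 3 * ((1 - ρ) * b ^ 4 + (γ ^ 4 / ρ ^ 3) * c ^ 4) := by
    have expand : ρ ^ 3 * ((1 - ρ) * b ^ 4 + (γ ^ 4 / ρ ^ 3) * c ^ 4)
        = ρ ^ 3 * (1 - ρ) * b ^ 4 + γ ^ 4 * c ^ 4 := by
      field_simp
    rw [expand]
    nlinarith [h2, h1sq, hρ.le, mul_le_mul_of_nonneg_left h1sq hρ.le]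
  exact le_of_mul_le_mul_left key hρ3

lemma sqrt_sum_sq_add_le {ι : Type*} [Fintype ι] (f g : ι → ℝ) :
    Real.sqrt (∑ i, (f i + g i) ^ 2)
      ≤ Real.sqrt (∑ i, f i ^ 2) + Real.sqrt (∑ i, g i ^ 2) := by
  set A := ∑ i, f i ^ 2 with hA'
  set B := ∑ i, g i ^ 2 with hB'
  have hA : (0:ℝ) ≤ A := by positivity
  have hB : (0:ℝ) ≤ B := by positivity
  have hC : ∑ i, f i * g i ≤ Real.sqrt A * Real.sqrt B := by
    have h2 := Finset.sum_mul_sq_le_sq_mul_sq Finset.univ f g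
    calc ∑ i, f i * g i ≤ |∑ i, f i * g i| := le_abs_self _
      _ = Real.sqrt ((∑ i, f i * g i) ^ 2) := (Real.sqrt_sq_eq_abs _).symm
      _ ≤ Real.sqrt (A * B) := Real.sqrt_le_sqrt h2
      _ = Real.sqrt A * Real.sqrt B := Real.sqrt_mul hA _
  have hsum : ∑ i, (f i + g i) ^ 2 ≤ (Real.sqrt A + Real.sqrt B) ^ 2 := by
    have e1 : ∑ i, (f i + g i) ^ 2 = A + 2 * ∑ i, f i * g i + B := by
      simp_rw [add_sq, Finset.sum_add_distrib, mul_assoc, ← Finset.mul_sum]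
      rfl
    have e2 : (Real.sqrt A + Real.sqrt B) ^ 2
        = A + 2 * (Real.sqrt A * Real.sqrt B) + B := by
      rw [add_sq, Real.sq_sqrt hA, Real.sq_sqrt hB]; ring
    rw [e1, e2]; linarith
  calc Real.sqrt (∑ i, (f i + g i) ^ 2)
      ≤ Real.sqrt ((Real.sqrt A + Real.sqrt B) ^ 2) := Real.sqrt_le_sqrt hsum
    _ = Real.sqrt A + Real.sqrt B := Real.sqrt_sq (by positivity)

lemma dot_self_eq {m k : Type*} [Fintype m] [Fintype k] (A : Matrix m k ℝ) (z : k → ℝ) :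
    ∑ i, ((A *ᵥ z) i) ^ 2 = z ⬝ᵥ ((Aᵀ * A) *ᵥ z) := by
  rw [← Matrix.mulVec_mulVec, Matrix.dotProduct_mulVec, Matrix.vecMul_transpose]
  simp [dotProduct, sq]

/-- One-step fourth-order consensus error recursion for DSGD. -/
theorem consensus_one_step_pow4 {n d : ℕ} (hn : 0 < n)
    (W : Matrix (Fin n) (Fin n) ℝ) (U : Matrix (Fin n) (Fin (n - 1)) ℝ)
    (ρ : ℝ) (hρ : ρ ∈ Set.Ioc (0 : ℝ) 1)
    (hWsym : Wᵀ = W)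
    (hWnn : ∀ i j, 0 ≤ W i j)
    (hWrow : ∀ i, ∑ j, W i j = 1) (hWcol : ∀ j, ∑ i, W i j = 1)
    (hU : (1 : Matrix (Fin n) (Fin n) ℝ)
        - (n : ℝ)⁻¹ • (Matrix.of fun _ _ => (1 : ℝ)) = U * Uᵀ)
    (hspec : ∀ v : Fin (n - 1) → ℝ,
      euclNorm ((Uᵀ * W * U) *ᵥ v) ≤ (1 - ρ) * euclNorm v)
    (P G : Matrix (Fin n) (Fin d) ℝ) (γ : ℝ) (hγ : 0 < γ) :
    frobNorm (((1 : Matrix (Fin n) (Fin n) ℝ)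
        - (n : ℝ)⁻¹ • (Matrix.of fun _ _ => (1 : ℝ))) * (W * P - γ • G)) ^ 4
      ≤ (1 - ρ) * frobNorm (((1 : Matrix (Fin n) (Fin n) ℝ)
          - (n : ℝ)⁻¹ • (Matrix.of fun _ _ => (1 : ℝ))) * P) ^ 4
        + (γ ^ 4 / ρ ^ 3) * frobNorm (((1 : Matrix (Fin n) (Fin n) ℝ)
          - (n : ℝ)⁻¹ • (Matrix.of fun _ _ => (1 : ℝ))) * G) ^ 4 := by
  have hn' : (n : ℝ) ≠ 0 := Nat.cast_ne_zero.2 hn.ne'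
  have hρ1 : ρ ≤ 1 := hρ.2
  have hρ0 : 0 < ρ := hρ.1
  set J : Matrix (Fin n) (Fin n) ℝ := Matrix.of fun _ _ => (1 : ℝ) with hJ
  set Pr : Matrix (Fin n) (Fin n) ℝ := 1 - (n : ℝ)⁻¹ • J with hPr
  -- basic algebra of Pr, J, W, U
  have hJJ : J * J = (n : ℝ) • J := by
    ext i j; simp [hJ, mul_apply]
  have hPrJ : Pr * J = 0 := by
    rw [hPr, Matrix.sub_mul, Matrix.one_mul, Matrix.smul_mul, hJJ, smul_smul,
      inv_mul_cancel₀ hn', one_smul, sub_self]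
  have hPrPr : Pr * Pr = Pr := by
    calc Pr * Pr = Pr * 1 - Pr * ((n : ℝ)⁻¹ • J) := by rw [← Matrix.mul_sub, ← hPr]
      _ = Pr - (n : ℝ)⁻¹ • (Pr * J) := by rw [Matrix.mul_one, Matrix.mul_smul]
      _ = Pr := by rw [hPrJ, smul_zero, sub_zero]
  have hPrT : Prᵀ = Pr := by
    rw [hPr, Matrix.transpose_sub, Matrix.transpose_one, Matrix.transpose_smul]
    congr 1
  have hWJ : W * J = J := by
    ext i j; simp [hJ, mul_apply, hWrow]
  -- columns of U sum to zero
  have hU1 : ∀ a, ∑ i, U i a = 0 := by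
    have key : ∑ a, (∑ i, U i a) ^ 2 = 0 := by
      have e1 : ∑ a, (∑ i, U i a) ^ 2 = ∑ i, ∑ i', (U * Uᵀ) i i' := by
        simp_rw [mul_apply, transpose_apply, sq, Finset.sum_mul, Finset.mul_sum]
        rw [Finset.sum_comm]
        exact Finset.sum_congr rfl fun i _ => Finset.sum_comm
      rw [e1, ← hU, hPr]
      simp only [Matrix.sub_apply, Matrix.smul_apply, Matrix.one_apply, Matrix.of_apply,
        smul_eq_mul, mul_one]
      rw [Finset.sum_comm]
      simp only [Finset.sum_sub_distrib, hJ, Matrix.of_apply, mul_one]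
      simp [Finset.sum_ite_eq, Finset.card_univ]
      field_simp
      simp
    intro a
    have h := (Finset.sum_eq_zero_iff_of_nonneg (fun a _ => sq_nonneg (∑ i, U i a))).1 key
    exact pow_eq_zero_iff (by norm_num) |>.1 (h a (Finset.mem_univ a))
  have hUJ : Uᵀ * J = 0 := by
    ext a j; simp [hJ, mul_apply, transpose_apply, hU1]
  -- Uᵀ W = (Uᵀ W U) Uᵀ
  have hUW : Uᵀ * W = (Uᵀ * W * U) * Uᵀ := by
    have hWPr : W * Pr = W - (n : ℝ)⁻¹ • J := by
      rw [hPr, Matrix.mul_sub, Matrix.mul_one, Matrix.mul_smul, hWJ]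
    have : Uᵀ * (W * Pr) = Uᵀ * W := by
      rw [hWPr, Matrix.mul_sub, Matrix.mul_smul, hUJ, smul_zero, sub_zero]
    calc Uᵀ * W = Uᵀ * (W * Pr) := this.symm
      _ = Uᵀ * (W * (U * Uᵀ)) := by rw [hU]
      _ = (Uᵀ * W * U) * Uᵀ := by rw [← Matrix.mul_assoc, ← Matrix.mul_assoc]
  -- squared-norm identity: ‖Pr z‖² = ‖Uᵀ z‖²
  have hsq : ∀ z : Fin n → ℝ, ∑ i, ((Pr *ᵥ z) i) ^ 2 = ∑ a, ((Uᵀ *ᵥ z) a) ^ 2 := by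
    intro z
    rw [dot_self_eq, dot_self_eq, Matrix.transpose_transpose, ← hU, hPrT, hPrPr]
  -- per-column contraction
  have hcontr : ∀ z : Fin n → ℝ,
      ∑ i, (((Pr * W) *ᵥ z) i) ^ 2 ≤ (1 - ρ) ^ 2 * ∑ i, ((Pr *ᵥ z) i) ^ 2 := by
    intro z
    have e1 : (Pr * W) *ᵥ z = Pr *ᵥ (W *ᵥ z) := (Matrix.mulVec_mulVec _ _ _).symm
    have evec : Uᵀ *ᵥ (W *ᵥ z) = (Uᵀ * W * U) *ᵥ (Uᵀ *ᵥ z) := by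
      rw [Matrix.mulVec_mulVec, Matrix.mulVec_mulVec]
      conv_lhs => rw [hUW]
    have e2 : ∑ i, ((Pr *ᵥ (W *ᵥ z)) i) ^ 2 = ∑ a, (((Uᵀ * W * U) *ᵥ (Uᵀ *ᵥ z)) a) ^ 2 := by
      rw [hsq, evec]
    have hs := hspec (Uᵀ *ᵥ z)
    have hnn : 0 ≤ euclNorm (Uᵀ *ᵥ z) := Real.sqrt_nonneg _
    have hnn2 : 0 ≤ euclNorm ((Uᵀ * W * U) *ᵥ (Uᵀ *ᵥ z)) := Real.sqrt_nonneg _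
    have hsq2 : euclNorm ((Uᵀ * W * U) *ᵥ (Uᵀ *ᵥ z)) ^ 2
        ≤ ((1 - ρ) * euclNorm (Uᵀ *ᵥ z)) ^ 2 := pow_le_pow_left₀ hnn2 hs 2
    have eA : euclNorm ((Uᵀ * W * U) *ᵥ (Uᵀ *ᵥ z)) ^ 2
        = ∑ a, (((Uᵀ * W * U) *ᵥ (Uᵀ *ᵥ z)) a) ^ 2 := by
      rw [euclNorm, Real.sq_sqrt (by positivity)]
    have eB : euclNorm (Uᵀ *ᵥ z) ^ 2 = ∑ a, ((Uᵀ *ᵥ z) a) ^ 2 := by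
      rw [euclNorm, Real.sq_sqrt (by positivity)]
    rw [e1, e2]
    calc ∑ a, (((Uᵀ * W * U) *ᵥ (Uᵀ *ᵥ z)) a) ^ 2
        ≤ ((1 - ρ) * euclNorm (Uᵀ *ᵥ z)) ^ 2 := by rw [← eA]; exact hsq2
      _ = (1 - ρ) ^ 2 * ∑ a, ((Uᵀ *ᵥ z) a) ^ 2 := by rw [mul_pow, eB]
      _ = (1 - ρ) ^ 2 * ∑ i, ((Pr *ᵥ z) i) ^ 2 := by rw [hsq]
  -- Frobenius contraction
  have hfrob : ∀ Q : Matrix (Fin n) (Fin d) ℝ,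
      frobNorm (Pr * W * Q) ≤ (1 - ρ) * frobNorm (Pr * Q) := by
    intro Q
    have hcol : ∀ (A : Matrix (Fin n) (Fin n) ℝ) (i : Fin n) (j : Fin d),
        (A * Q) i j = (A *ᵥ fun k => Q k j) i := by
      intro A i j; simp [mul_apply, mulVec, dotProduct]
    have hsum : ∑ i, ∑ j, ((Pr * W * Q) i j) ^ 2
        ≤ (1 - ρ) ^ 2 * ∑ i, ∑ j, ((Pr * Q) i j) ^ 2 := by
      rw [Finset.sum_comm, Finset.sum_comm (f := fun i j => ((Pr * Q) i j) ^ 2),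
        Finset.mul_sum]
      refine Finset.sum_le_sum fun j _ => ?_
      have := hcontr (fun k => Q k j)
      simpa only [← hcol] using this
    have h1ρ : 0 ≤ 1 - ρ := sub_nonneg.2 hρ1
    calc frobNorm (Pr * W * Q) = Real.sqrt (∑ i, ∑ j, ((Pr * W * Q) i j) ^ 2) := rfl
      _ ≤ Real.sqrt ((1 - ρ) ^ 2 * ∑ i, ∑ j, ((Pr * Q) i j) ^ 2) := Real.sqrt_le_sqrt hsum
      _ = (1 - ρ) * frobNorm (Pr * Q) := by
          rw [Real.sqrt_mul (by positivity), Real.sqrt_sq h1ρ]; rfl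
  -- triangle inequality step
  have hdist : Pr * (W * P - γ • G) = Pr * W * P - γ • (Pr * G) := by
    rw [Matrix.mul_sub, Matrix.mul_smul, Matrix.mul_assoc]
  have htri : frobNorm (Pr * (W * P - γ • G))
      ≤ (1 - ρ) * frobNorm (Pr * P) + γ * frobNorm (Pr * G) := by
    have t1 : frobNorm (Pr * W * P - γ • (Pr * G))
        ≤ frobNorm (Pr * W * P) + frobNorm (γ • (Pr * G)) := by
      have := sqrt_sum_sq_add_le (ι := Fin n × Fin d)
        (fun p => (Pr * W * P) p.1 p.2) (fun p => (-(γ • (Pr * G))) p.1 p.2)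
      have e : ∀ p : Fin n × Fin d,
          (Pr * W * P - γ • (Pr * G)) p.1 p.2
            = (Pr * W * P) p.1 p.2 + (-(γ • (Pr * G))) p.1 p.2 := by
        intro p; rw [Matrix.sub_apply, Matrix.neg_apply]; ring
      have e2 : ∀ p : Fin n × Fin d,
          ((-(γ • (Pr * G))) p.1 p.2) ^ 2 = ((γ • (Pr * G)) p.1 p.2) ^ 2 := by
        intro p; rw [Matrix.neg_apply]; ring
      simp_rw [e2] at this
      rw [frobNorm, frobNorm, frobNorm, ← Fintype.sum_prod_type',
        ← Fintype.sum_prod_type', ← Fintype.sum_prod_type']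
      simp_rw [e]
      exact this
    have t2 : frobNorm (γ • (Pr * G)) = γ * frobNorm (Pr * G) := by
      simp only [frobNorm, Matrix.smul_apply, smul_eq_mul, mul_pow, ← Finset.mul_sum]
      rw [Real.sqrt_mul (sq_nonneg _), Real.sqrt_sq hγ.le]
    rw [hdist]
    calc frobNorm (Pr * W * P - γ • (Pr * G))
        ≤ frobNorm (Pr * W * P) + frobNorm (γ • (Pr * G)) := t1
      _ ≤ (1 - ρ) * frobNorm (Pr * P) + γ * frobNorm (Pr * G) := by
          rw [t2]; exact add_le_add (hfrob P) le_rfl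
  -- final scalar step
  have ha : 0 ≤ frobNorm (Pr * (W * P - γ • G)) := Real.sqrt_nonneg _
  calc frobNorm (Pr * (W * P - γ • G)) ^ 4
      ≤ ((1 - ρ) * frobNorm (Pr * P) + γ * frobNorm (Pr * G)) ^ 4 :=
        pow_le_pow_left₀ ha htri 4
    _ ≤ (1 - ρ) * frobNorm (Pr * P) ^ 4 + (γ ^ 4 / ρ ^ 3) * frobNorm (Pr * G) ^ 4 :=
        pow4_bound hρ0 hρ1
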